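/- Let G be a finite multigraph and let v ≠ w be vertices forming a 3-connection in G, i.e., λ(v, w) ≥ 3. If π is a partition of the vertex set of G such that the quotient G^π is a cactus, then v and w belong to the same block of π. -/

import Mathlib

set_option autoImplicit false

/-! ## Multigraphs -/

/-- A multigraph: a vertex type `V`, an edge type `E`, and an assignment to each edge of
its unordered pair of endpoints.  Loops and parallel edges are allowed. -/
structure Multigraph (V E : Type) where
  ends : E → Sym2 V

namespace Multigraph

variable {V E : Type}

/-- `G.ReachAvoid F u v` : `v` can be reached from `u` by a walk using no edge of `F`. -/
inductive ReachAvoid (G : Multigraph V E) (F : Set E) : V → V → Prop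
  | refl (v : V) : ReachAvoid G F v v
  | tail {u v w : V} (e : E) (he : e ∉ F) (hvw : G.ends e = s(v, w))
      (h : ReachAvoid G F u v) : ReachAvoid G F u w

/-- A multigraph is connected if any two vertices are joined by a walk. -/
def Connected (G : Multigraph V E) : Prop := ∀ u v : V, G.ReachAvoid ∅ u v

/-- `F` is a set of edges whose deletion disconnects `v` from `w`. -/
def IsEdgeCut (G : Multigraph V E) (v w : V) (F : Set E) : Prop := ¬ G.ReachAvoid F v w

/-- Edge connectivity `λ(v, w)`: the minimum number of edges whose deletion
disconnects `v` from `w`. -/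
noncomputable def edgeConn (G : Multigraph V E) (v w : V) : ℕ :=
  sInf {k : ℕ | ∃ F : Finset E, F.card = k ∧ G.IsEdgeCut v w ↑F}

/-- Walks in a multigraph, recorded together with the edges they traverse. -/
inductive Walk (G : Multigraph V E) : V → V → Type
  | nil (v : V) : Walk G v v
  | cons {u v w : V} (e : E) (huv : G.ends e = s(u, v)) (p : Walk G v w) : Walk G u w

namespace Walk

variable {G : Multigraph V E}

/-- The list of edges traversed by a walk. -/
def edges : ∀ {u v : V}, G.Walk u v → List E
  | _, _, .nil _ => []
  | _, _, .cons e _ p => e :: edges p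

/-- The list of vertices visited by a walk (including both endpoints). -/
def verts : ∀ {u v : V}, G.Walk u v → List V
  | _, v, .nil _ => [v]
  | u, _, .cons _ _ p => u :: verts p

/-- A walk is a path if it visits no vertex twice. -/
def IsPath {u v : V} (p : G.Walk u v) : Prop := p.verts.Nodup

end Walk

/-- `S` is the edge set of a simple cycle of `G`: a nonempty closed walk with no repeated
edges and no repeated vertices (other than the final return to the starting point).
A loop is a simple cycle of length one. -/
def IsSimpleCycleOn [DecidableEq E] (G : Multigraph V E) (S : Finset E) : Prop :=
  ∃ (v : V) (p : G.Walk v v),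
    p.edges ≠ [] ∧ p.edges.Nodup ∧ p.verts.dropLast.Nodup ∧ p.edges.toFinset = S

/-- A cactus: a connected multigraph in which every edge lies on exactly one simple cycle
(simple cycles being identified with their edge sets). -/
def IsCactus [DecidableEq E] (G : Multigraph V E) : Prop :=
  G.Connected ∧ ∀ e : E, ∃! S : Finset E, G.IsSimpleCycleOn S ∧ e ∈ S

/-- Two-edge-connected: connected, and still connected after deleting any single edge. -/
def TwoEdgeConnected (G : Multigraph V E) : Prop :=
  G.Connected ∧ ∀ (e : E) (u v : V), G.ReachAvoid {e} u v

/-- The quotient multigraph by a partition (setoid) of the vertices: the vertices are the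
blocks, and each edge joins the blocks of its original endpoints. -/
def quot (G : Multigraph V E) (σ : Setoid V) : Multigraph (Quotient σ) E :=
  ⟨fun e => (G.ends e).map (Quotient.mk σ)⟩

/-- Degree of a vertex: the number of edge-incidences at it (loops count twice). -/
def degree [DecidableEq V] [Fintype E] (G : Multigraph V E) (v : V) : ℕ :=
  ∑ e : E,
    Sym2.lift
      ⟨fun a b => (if a = v then 1 else 0) + (if b = v then 1 else 0),
        fun _ _ => add_comm _ _⟩ (G.ends e)

/-- A leaf is a vertex of degree one. -/
def IsLeaf [DecidableEq V] [Fintype E] (G : Multigraph V E) (v : V) : Prop :=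
  G.degree v = 1

/-- A tree: a connected multigraph with no simple cycles. -/
def IsTree [DecidableEq E] (G : Multigraph V E) : Prop :=
  G.Connected ∧ ∀ S : Finset E, ¬ G.IsSimpleCycleOn S

end Multigraph

/-- An embedding of the multigraph `H` into `G`, realizing `H` as a subgraph of `G`. -/
structure Multigraph.Embedding {W F V E : Type} (H : Multigraph W F) (G : Multigraph V E) where
  vmap : W → V
  emap : F → E
  vmap_inj : Function.Injective vmap
  emap_inj : Function.Injective emap
  ends_map : ∀ f : F, G.ends (emap f) = (H.ends f).map vmap

/-! ## Multidigraphs -/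

/-- A multidigraph: vertex type `V`, edge type `E`, and source and target maps. -/
structure Multidigraph (V E : Type) where
  src : E → V
  tgt : E → V

namespace Multidigraph

variable {V E : Type}

/-- The underlying multigraph of a multidigraph. -/
def toMultigraph (D : Multidigraph V E) : Multigraph V E :=
  ⟨fun e => s(D.src e, D.tgt e)⟩

/-- Directed walks in a multidigraph. -/
inductive DiWalk (D : Multidigraph V E) : V → V → Type
  | nil (v : V) : DiWalk D v v
  | cons {u v w : V} (e : E) (hs : D.src e = u) (ht : D.tgt e = v)
      (p : DiWalk D v w) : DiWalk D u w

namespace DiWalk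

variable {D : Multidigraph V E}

/-- The list of edges traversed by a directed walk. -/
def edges : ∀ {u v : V}, D.DiWalk u v → List E
  | _, _, .nil _ => []
  | _, _, .cons e _ _ p => e :: edges p

/-- The list of vertices visited by a directed walk. -/
def verts : ∀ {u v : V}, D.DiWalk u v → List V
  | _, v, .nil _ => [v]
  | u, _, .cons _ _ _ p => u :: verts p

end DiWalk

/-- `S` is the edge set of a simple directed cycle of `D`. -/
def IsDiCycleOn [DecidableEq E] (D : Multidigraph V E) (S : Finset E) : Prop :=
  ∃ (v : V) (p : D.DiWalk v v),
    p.edges ≠ [] ∧ p.edges.Nodup ∧ p.verts.dropLast.Nodup ∧ p.edges.toFinset = S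

/-- An oriented cactus: the underlying multigraph is a cactus and each of its simple
cycles (pads) is a directed cycle. -/
def IsOrientedCactus [DecidableEq E] (D : Multidigraph V E) : Prop :=
  D.toMultigraph.IsCactus ∧
    ∀ S : Finset E, D.toMultigraph.IsSimpleCycleOn S → D.IsDiCycleOn S

/-- The quotient multidigraph by a partition (setoid) of the vertices. -/
def quot (D : Multidigraph V E) (σ : Setoid V) : Multidigraph (Quotient σ) E where
  src := fun e => Quotient.mk σ (D.src e)
  tgt := fun e => Quotient.mk σ (D.tgt e)

/-- Indegree of a vertex: the number of edges with target `v`. -/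
def indeg [DecidableEq V] [Fintype E] (D : Multidigraph V E) (v : V) : ℕ :=
  (Finset.univ.filter fun e => D.tgt e = v).card

/-- Outdegree of a vertex: the number of edges with source `v`. -/
def outdeg [DecidableEq V] [Fintype E] (D : Multidigraph V E) (v : V) : ℕ :=
  (Finset.univ.filter fun e => D.src e = v).card

end Multidigraph

/-- An embedding of the multidigraph `H` into `G`, realizing `H` as a subgraph of `G`. -/
structure Multidigraph.Embedding {W F V E : Type}
    (H : Multidigraph W F) (G : Multidigraph V E) where
  vmap : W → V
  emap : F → E
  vmap_inj : Function.Injective vmap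
  emap_inj : Function.Injective emap
  src_map : ∀ f : F, G.src (emap f) = vmap (H.src f)
  tgt_map : ∀ f : F, G.tgt (emap f) = vmap (H.tgt f)

/-! ## Cycle graphs and non-crossing partitions -/

/-- The cycle graph of length `n`: vertices `Fin n`, edges `Fin n`, edge `i` joining
`v i` and `v (i+1)` (indices mod `n`). -/
def cycleGraph (n : ℕ) [NeZero n] : Multigraph (Fin n) (Fin n) :=
  ⟨fun i => s(i, i + 1)⟩

/-- The cycle graph of length `n` in which each edge carries an orientation:
edge `i` is oriented counterclockwise (from `v i` to `v (i+1)`) if `orient i = true`,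
and clockwise otherwise. -/
def cycleDigraph (n : ℕ) [NeZero n] (orient : Fin n → Bool) : Multidigraph (Fin n) (Fin n) where
  src := fun i => if orient i then i else i + 1
  tgt := fun i => if orient i then i + 1 else i

/-- A relation (e.g. a partition) on `Fin m` is non-crossing if there are no indices
`i₁ < i₂ < i₃ < i₄` with `i₁, i₃` in one block and `i₂, i₄` in a different block. -/
def NonCrossingRel {m : ℕ} (r : Fin m → Fin m → Prop) : Prop :=
  ¬ ∃ i₁ i₂ i₃ i₄ : Fin m, i₁ < i₂ ∧ i₂ < i₃ ∧ i₃ < i₄ ∧ r i₁ i₃ ∧ r i₂ i₄ ∧ ¬ r i₁ i₂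

/-- The union of a partition `σ` of the vertices `v₁, …, vₙ` (at the even positions) and
a partition `κ` of the edges `e₁, …, eₙ` (at the odd positions) of a cycle, as a relation
on the `2n` interlaced points `v₁, e₁, v₂, e₂, …, vₙ, eₙ`. -/
def interRel {n : ℕ} (σ κ : Setoid (Fin n)) (x y : Fin (2 * n)) : Prop :=
  (x.val % 2 = 0 ∧ y.val % 2 = 0 ∧
    σ.r ⟨x.val / 2, by have := x.isLt; omega⟩ ⟨y.val / 2, by have := y.isLt; omega⟩) ∨
  (x.val % 2 = 1 ∧ y.val % 2 = 1 ∧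
    κ.r ⟨x.val / 2, by have := x.isLt; omega⟩ ⟨y.val / 2, by have := y.isLt; omega⟩)

/-- `κ` is the Kreweras complement of `σ`: the largest partition of the edges such that
the union `σ ∪ κ` is non-crossing with respect to the interlaced (cyclic) order. -/
def IsKrewerasComplement {n : ℕ} (σ κ : Setoid (Fin n)) : Prop :=
  NonCrossingRel (interRel σ κ) ∧
    ∀ κ' : Setoid (Fin n), NonCrossingRel (interRel σ κ') → κ' ≤ κ

open Classical in
/-- The block of the partition `κ` containing `i`, as a finite set. -/
noncomputable def setoidClass {n : ℕ} (κ : Setoid (Fin n)) (i : Fin n) : Finset (Fin n) :=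
  Finset.univ.filter fun j => κ.r i j

open Fin.NatCast in
/-- `j` is the next element of `B` encountered strictly after `i` in the cyclic order of
`Fin n` (if `B = {i}` then `j = i` itself, one full turn later). -/
def CyclicNextIn {n : ℕ} [NeZero n] (B : Finset (Fin n)) (i j : Fin n) : Prop :=
  i ∈ B ∧ j ∈ B ∧ ∃ d : ℕ, 0 < d ∧ d ≤ n ∧ j = i + (d : Fin n) ∧
    ∀ d' : ℕ, 0 < d' → d' < d → i + (d' : Fin n) ∉ B

/-! ## Wedges of two (di)graphs at their roots -/

/-- The canonical map from the vertices of `t'` into the wedge vertex type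
`V ⊕ {x : V' // x ≠ ρ'}`, sending the root `ρ'` to (the image of) `ρ`. -/
def wedgeJ {V V' : Type} [DecidableEq V'] (ρ : V) (ρ' : V') :
    V' → V ⊕ {x : V' // x ≠ ρ'} :=
  fun x => if h : x = ρ' then Sum.inl ρ else Sum.inr ⟨x, h⟩

/-- The wedge of two multigraphs `t`, `t'` obtained by identifying `ρ ∈ t` with `ρ' ∈ t'`. -/
def Multigraph.wedge {V E V' E' : Type} [DecidableEq V']
    (t : Multigraph V E) (t' : Multigraph V' E') (ρ : V) (ρ' : V') :
    Multigraph (V ⊕ {x : V' // x ≠ ρ'}) (E ⊕ E') :=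
  ⟨fun e =>
    match e with
    | Sum.inl e => (t.ends e).map Sum.inl
    | Sum.inr e => (t'.ends e).map (wedgeJ ρ ρ')⟩

/-- The wedge of two multidigraphs `t`, `t'` obtained by identifying `ρ ∈ t` with `ρ' ∈ t'`. -/
def Multidigraph.wedge {V E V' E' : Type} [DecidableEq V']
    (t : Multidigraph V E) (t' : Multidigraph V' E') (ρ : V) (ρ' : V') :
    Multidigraph (V ⊕ {x : V' // x ≠ ρ'}) (E ⊕ E') where
  src := fun e =>
    match e with
    | Sum.inl e => Sum.inl (t.src e)
    | Sum.inr e => wedgeJ ρ ρ' (t'.src e)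
  tgt := fun e =>
    match e with
    | Sum.inl e => Sum.inl (t.tgt e)
    | Sum.inr e => wedgeJ ρ ρ' (t'.tgt e)

/-! ## Flowers (a cycle with graphs attached) and stars (trees wedged at a common root) -/

/-- The canonical map from the vertices of the `i`-th attached graph into the flower,
sending the basepoint `b i` to the cycle vertex `i`. -/
def flowerJ {n : ℕ} {W : Fin n → Type} [∀ i, DecidableEq (W i)]
    (b : ∀ i, W i) (i : Fin n) :
    W i → Fin n ⊕ (Σ i, {x : W i // x ≠ b i}) :=
  fun x => if h : x = b i then Sum.inl i else Sum.inr ⟨i, x, h⟩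

/-- The flower: a cycle of length `n` with the multigraph `d i` attached at the cycle
vertex `i` via its basepoint `b i`; the attached graphs are disjoint except through the
cycle, and `d i` meets the cycle exactly in the vertex `i`. -/
def flowerGraph {n : ℕ} [NeZero n] {W F : Fin n → Type} [∀ i, DecidableEq (W i)]
    (d : ∀ i, Multigraph (W i) (F i)) (b : ∀ i, W i) :
    Multigraph (Fin n ⊕ (Σ i, {x : W i // x ≠ b i})) (Fin n ⊕ (Σ i, F i)) :=
  ⟨fun e =>
    match e with
    | Sum.inl k => s(Sum.inl k, Sum.inl (k + 1))
    | Sum.inr ⟨i, f⟩ => ((d i).ends f).map (flowerJ b i)⟩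

/-- The canonical map from the vertices of the `i`-th tree into the star, sending the
root `r i` to the common amalgamated root. -/
def starJ {n : ℕ} {W : Fin n → Type} [∀ i, DecidableEq (W i)]
    (r : ∀ i, W i) (i : Fin n) :
    W i → Unit ⊕ (Σ i, {x : W i // x ≠ r i}) :=
  fun x => if h : x = r i then Sum.inl () else Sum.inr ⟨i, x, h⟩

/-- The star: the disjoint union of the multigraphs `t i` with all the roots `r i`
identified to a single vertex. -/
def starGraph {n : ℕ} {W F : Fin n → Type} [∀ i, DecidableEq (W i)]
    (t : ∀ i, Multigraph (W i) (F i)) (r : ∀ i, W i) :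
    Multigraph (Unit ⊕ (Σ i, {x : W i // x ≠ r i})) (Σ i, F i) :=
  ⟨fun e => ((t e.1).ends e.2).map (starJ r e.1)⟩

/-! ## Graphs of matrices -/

/-- The partition of `V` identifying the input `vin` with the output `vout` (and nothing
else). -/
def rootSetoid {V : Type} (vin vout : V) : Setoid V where
  r a b := a = b ∨ ((a = vin ∨ a = vout) ∧ (b = vin ∨ b = vout))
  iseqv := by
    constructor
    · intro x; exact Or.inl rfl
    · rintro x y (rfl | ⟨hx, hy⟩)
      · exact Or.inl rfl
      · exact Or.inr ⟨hy, hx⟩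
    · rintro x y z (rfl | ⟨hx, hy⟩) (rfl | ⟨hy', hz⟩)
      · exact Or.inl rfl
      · exact Or.inr ⟨hy', hz⟩
      · exact Or.inr ⟨hx, hy⟩
      · exact Or.inr ⟨hx, hz⟩

/-- The graph of matrices `Z_g(A₁, …, A_K)` associated to a bi-rooted multidigraph `g`
with input `vin`, output `vout` and edge ordering `o`. -/
noncomputable def graphOfMatrices {V E : Type} [Fintype V] [Fintype E] [DecidableEq V] {K N : ℕ}
    (g : Multidigraph V E) (vin vout : V) (o : E ≃ Fin K)
    (A : Fin K → Matrix (Fin N) (Fin N) ℂ) : Matrix (Fin N) (Fin N) ℂ :=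
  Matrix.of fun i j =>
    ∑ φ : V → Fin N,
      if φ vout = i ∧ φ vin = j then ∏ e : E, A (o e) (φ (g.tgt e)) (φ (g.src e)) else 0

/-! ## Set partitions as finite set systems -/

/-- `P` is a partition of the (finite) type `V`: its blocks are nonempty and every
element of `V` lies in exactly one block. -/
def IsPartitionOf (V : Type) [DecidableEq V] (P : Finset (Finset V)) : Prop :=
  (∀ B ∈ P, B.Nonempty) ∧ ∀ v : V, ∃! B, B ∈ P ∧ v ∈ B

/-- The block of the partition `P` containing `v`. -/
def blockOf {V : Type} [DecidableEq V] (P : Finset (Finset V)) (hP : IsPartitionOf V P)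
    (v : V) : {B : Finset V // B ∈ P} :=
  ⟨Finset.choose (fun B => v ∈ B) P (hP.2 v),
    Finset.choose_mem (fun B => v ∈ B) P (hP.2 v)⟩

/-! ## Auxiliary development for Statement 4 -/

section ThreeConnAux

open List

namespace Multigraph

variable {V E : Type} {G : Multigraph V E}

namespace Walk

@[simp] lemma edges_nil (v : V) : (Walk.nil v : G.Walk v v).edges = [] := rfl
@[simp] lemma edges_cons {u v w : V} (e : E) (h : G.ends e = s(u, v)) (p : G.Walk v w) :
    (Walk.cons e h p).edges = e :: p.edges := rfl
@[simp] lemma verts_nil (v : V) : (Walk.nil v : G.Walk v v).verts = [v] := rfl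
@[simp] lemma verts_cons {u v w : V} (e : E) (h : G.ends e = s(u, v)) (p : G.Walk v w) :
    (Walk.cons e h p).verts = u :: p.verts := rfl

lemma verts_ne_nil : ∀ {u v : V} (p : G.Walk u v), p.verts ≠ []
  | _, _, .nil _ => by simp
  | _, _, .cons _ _ _ => by simp

lemma start_mem_verts : ∀ {u v : V} (p : G.Walk u v), u ∈ p.verts
  | _, _, .nil _ => by simp
  | _, _, .cons _ _ _ => by simp

lemma end_mem_verts : ∀ {u v : V} (p : G.Walk u v), v ∈ p.verts
  | _, _, .nil _ => by simp
  | _, _, .cons _ _ p => by simpa using Or.inr (end_mem_verts p)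

lemma verts_dropLast_cons {u v w : V} (e : E) (h : G.ends e = s(u, v)) (p : G.Walk v w) :
    (Walk.cons e h p).verts.dropLast = u :: p.verts.dropLast := by
  rw [verts_cons, List.dropLast_cons_of_ne_nil (verts_ne_nil p)]

lemma verts_eq_dropLast_append : ∀ {u v : V} (p : G.Walk u v),
    p.verts = p.verts.dropLast ++ [v]
  | _, _, .nil _ => rfl
  | _, _, .cons e h p => by
      rw [verts_dropLast_cons, verts_cons, List.cons_append]
      exact congrArg _ (verts_eq_dropLast_append p)

lemma start_mem_verts_dropLast : ∀ {u v : V} (p : G.Walk u v), p.edges ≠ [] →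
    u ∈ p.verts.dropLast
  | _, _, .nil _, h => by simp at h
  | _, _, .cons e he p, _ => by rw [verts_dropLast_cons]; exact List.mem_cons_self

lemma eq_of_edges_eq_nil : ∀ {u v : V} (p : G.Walk u v), p.edges = [] → u = v
  | _, _, .nil _, _ => rfl
  | _, _, .cons _ _ _, h => by simp at h

lemma edges_ne_nil_of_ne {u v : V} (p : G.Walk u v) (h : u ≠ v) : p.edges ≠ [] :=
  fun he => h (eq_of_edges_eq_nil p he)

lemma cons_of_ne {u v : V} (p : G.Walk u v) (h : u ≠ v) :
    ∃ (a : V) (e : E) (r : G.Walk a v) (he : G.ends e = s(u, a)), p = Walk.cons e he r := by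
  cases p with
  | nil => exact absurd rfl h
  | cons e he r => exact ⟨_, e, r, he, rfl⟩

/-- Both endpoints of an edge of a walk are vertices of the walk. -/
lemma ends_mem_verts : ∀ {u v : V} (p : G.Walk u v) (e : E) {a b : V},
    e ∈ p.edges → G.ends e = s(a, b) → a ∈ p.verts ∧ b ∈ p.verts
  | _, _, .nil _, _, _, _, he, _ => by simp at he
  | _, _, .cons e' he' p, e, a, b, he, hab => by
      rw [edges_cons, List.mem_cons] at he
      rcases he with rfl | he
      · rw [he'] at hab
        rw [Sym2.eq_iff] at hab
        rcases hab with ⟨rfl, rfl⟩ | ⟨rfl, rfl⟩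
        · exact ⟨start_mem_verts _, by simpa using Or.inr (start_mem_verts p)⟩
        · exact ⟨by simpa using Or.inr (start_mem_verts p), start_mem_verts _⟩
      · obtain ⟨ha, hb⟩ := ends_mem_verts p e he hab
        exact ⟨by simpa using Or.inr ha, by simpa using Or.inr hb⟩

lemma exists_last_edge : ∀ {u v : V} (p : G.Walk u v), p.edges ≠ [] →
    ∃ e ∈ p.edges, ∃ a, G.ends e = s(a, v)
  | _, _, .nil _, h => absurd rfl h
  | _, _, .cons e he p, _ => by
      classical
      by_cases hp : p.edges = []
      · obtain rfl := eq_of_edges_eq_nil p hp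
        exact ⟨e, by simp, _, he⟩
      · obtain ⟨e0, he0, a, ha⟩ := exists_last_edge p hp
        exact ⟨e0, by simp [he0], a, ha⟩

/-- Concatenation of walks. -/
def append : ∀ {u v w : V}, G.Walk u v → G.Walk v w → G.Walk u w
  | _, _, _, .nil _, q => q
  | _, _, _, .cons e h p, q => .cons e h (p.append q)

lemma edges_append : ∀ {u v w : V} (p : G.Walk u v) (q : G.Walk v w),
    (p.append q).edges = p.edges ++ q.edges
  | _, _, _, .nil _, q => rfl
  | _, _, _, .cons e h p, q => by
      show (Walk.cons e h (p.append q)).edges = _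
      rw [edges_cons, edges_cons, edges_append p q, List.cons_append]

lemma verts_append : ∀ {u v w : V} (p : G.Walk u v) (q : G.Walk v w),
    (p.append q).verts = p.verts.dropLast ++ q.verts
  | _, _, _, .nil _, q => by simp [append]
  | _, _, _, .cons e h p, q => by
      show (Walk.cons e h (p.append q)).verts = _
      rw [verts_cons, verts_append p q, verts_dropLast_cons, List.cons_append]

/-- Split a walk at a vertex it visits. -/
lemma split_at {u v : V} (p : G.Walk u v) : ∀ x : V, x ∈ p.verts →
    ∃ (p1 : G.Walk u x) (p2 : G.Walk x v),
      p1.edges ++ p2.edges = p.edges ∧ p1.verts.dropLast ++ p2.verts = p.verts := by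
  induction p with
  | nil v =>
      intro x hx
      obtain rfl : x = v := by simpa using hx
      exact ⟨Walk.nil _, Walk.nil _, by simp, by simp⟩
  | @cons u v w e he p ih =>
      intro x hx
      classical
      by_cases hxu : x = u
      · subst hxu
        exact ⟨.nil x, .cons e he p, by simp, by simp⟩
      · have hx' : x ∈ p.verts := by
          rw [verts_cons, List.mem_cons] at hx
          exact hx.resolve_left hxu
        obtain ⟨p1, p2, hE, hV⟩ := ih x hx'
        refine ⟨.cons e he p1, p2, ?_, ?_⟩
        · simp only [edges_cons, List.cons_append, hE]
        · rw [verts_dropLast_cons, verts_cons, List.cons_append, hV]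

/-- Shortcutting a walk with a repeated vertex. -/
lemma shortcut {u v : V} (p : G.Walk u v) : ¬ p.verts.Nodup →
    ∃ q : G.Walk u v, q.edges.length < p.edges.length ∧ ∀ e ∈ q.edges, e ∈ p.edges := by
  induction p with
  | nil v => intro h; simp at h
  | @cons u v w e he p ih =>
      intro h
      classical
      by_cases hu : u ∈ p.verts
      · obtain ⟨p1, p2, hE, _⟩ := split_at p u hu
        refine ⟨p2, ?_, ?_⟩
        · have : p1.edges.length + p2.edges.length = p.edges.length := by
            rw [← hE, List.length_append]
          simp only [edges_cons, List.length_cons]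
          omega
        · intro f hf
          rw [edges_cons, List.mem_cons]
          exact Or.inr (hE ▸ List.mem_append_right _ hf)
      · have h' : ¬ p.verts.Nodup := by
          rw [verts_cons, List.nodup_cons] at h
          tauto
        obtain ⟨q, hq1, hq2⟩ := ih h'
        refine ⟨.cons e he q, ?_, ?_⟩
        · simpa using hq1
        · intro f hf
          rw [edges_cons, List.mem_cons] at hf ⊢
          exact hf.imp _root_.id (hq2 f)

lemma edges_nodup_of_verts_nodup {u v : V} (p : G.Walk u v) : p.verts.Nodup →
    p.edges.Nodup := by
  induction p with
  | nil v => intro _; simp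
  | @cons u v w e he p ih =>
      intro h
      rw [verts_cons, List.nodup_cons] at h
      rw [edges_cons, List.nodup_cons]
      refine ⟨fun hmem => ?_, ih h.2⟩
      exact h.1 (ends_mem_verts p e hmem he).1

end Walk

open Walk

lemma ReachAvoid.trans {F : Set E} {u v w : V} (h1 : G.ReachAvoid F u v)
    (h2 : G.ReachAvoid F v w) : G.ReachAvoid F u w := by
  induction h2 with
  | refl => exact h1
  | tail e he hvw _ ih => exact .tail e he hvw ih

lemma ReachAvoid.single {F : Set E} {u v : V} (e : E) (he : e ∉ F)
    (h : G.ends e = s(u, v)) : G.ReachAvoid F u v :=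
  .tail e he h (.refl u)

lemma ReachAvoid.symm {F : Set E} {u v : V} (h : G.ReachAvoid F u v) :
    G.ReachAvoid F v u := by
  induction h with
  | refl => exact .refl _
  | tail e he hvw _ ih => exact .trans (.single e he (hvw.trans Sym2.eq_swap)) ih

lemma reachAvoid_of_walk {F : Set E} : ∀ {u v : V} (p : G.Walk u v),
    (∀ e ∈ p.edges, e ∉ F) → G.ReachAvoid F u v
  | _, _, .nil v, _ => .refl v
  | _, _, .cons e h p, hF =>
      .trans (.single e (hF e (by simp)) h)
        (reachAvoid_of_walk p fun f hf => hF f (by simp [hf]))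

lemma walk_of_reachAvoid {F : Set E} {u v : V} (h : G.ReachAvoid F u v) :
    ∃ p : G.Walk u v, ∀ e ∈ p.edges, e ∉ F := by
  induction h with
  | refl => exact ⟨.nil _, by simp⟩
  | tail e he hvw _ ih =>
      obtain ⟨p, hp⟩ := ih
      refine ⟨p.append (.cons e hvw (.nil _)), ?_⟩
      intro f hf
      rw [edges_append] at hf
      rcases List.mem_append.mp hf with hf | hf
      · exact hp f hf
      · obtain rfl : f = e := by simpa using hf
        exact he

lemma exists_min_walk {u v : V} (h : G.ReachAvoid ∅ u v) :
    ∃ p : G.Walk u v, ∀ q : G.Walk u v, p.edges.length ≤ q.edges.length := by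
  obtain ⟨p0, -⟩ := walk_of_reachAvoid h
  have hne : {n : ℕ | ∃ p : G.Walk u v, p.edges.length = n}.Nonempty := ⟨_, p0, rfl⟩
  obtain ⟨p, hp⟩ := Nat.sInf_mem hne
  exact ⟨p, fun q => hp ▸ Nat.sInf_le ⟨q, rfl⟩⟩

/-- Split a walk before its first edge lying in `S`. -/
lemma split_first_in {S : Finset E} : ∀ {u v : V} (p : G.Walk u v),
    (∃ e ∈ p.edges, e ∈ S) →
    ∃ (a : V) (p1 : G.Walk u a), (∀ f ∈ p1.edges, f ∉ S) ∧
      p1.edges.length < p.edges.length ∧ ∃ g ∈ S, ∃ b, G.ends g = s(a, b)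
  | _, _, .nil _, h => by simp at h
  | _, _, .cons e he p, h => by
      classical
      by_cases heS : e ∈ S
      · exact ⟨_, .nil _, by simp, by simp, e, heS, _, he⟩
      · obtain ⟨f, hf, hfS⟩ := h
        rw [edges_cons, List.mem_cons] at hf
        have hf' : f ∈ p.edges := by
          rcases hf with rfl | hf
          · exact absurd hfS heS
          · exact hf
        obtain ⟨a, p1, h1, h2, hg⟩ := split_first_in p ⟨f, hf', hfS⟩
        refine ⟨a, .cons e he p1, ?_, ?_, hg⟩
        · intro g hgm
          rw [edges_cons, List.mem_cons] at hgm
          rcases hgm with rfl | hgm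
          · exact heS
          · exact h1 g hgm
        · simpa using h2

/-- Rotating a closed walk to start at any of its vertices. -/
lemma rotate {z : V} (p : G.Walk z z) (c : V) (hc : c ∈ p.verts) :
    ∃ q : G.Walk c c, q.edges.Perm p.edges ∧ q.verts.dropLast.Perm p.verts.dropLast := by
  obtain ⟨p1, p2, hE, hV⟩ := split_at p c hc
  refine ⟨p2.append p1, ?_, ?_⟩
  · rw [edges_append, ← hE]
    exact List.perm_append_comm
  · rw [verts_append, List.dropLast_append_of_ne_nil (verts_ne_nil p1), ← hV,
      List.dropLast_append_of_ne_nil (verts_ne_nil p2)]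
    exact List.perm_append_comm

lemma mem_verts_dropLast {z x : V} (p : G.Walk z z) (hne : p.edges ≠ [])
    (hx : x ∈ p.verts) : x ∈ p.verts.dropLast := by
  rw [verts_eq_dropLast_append p, List.mem_append] at hx
  rcases hx with hx | hx
  · exact hx
  · obtain rfl : x = z := by simpa using hx
    exact start_mem_verts_dropLast p hne

/-- Key lemma: in a cactus, two distinct vertices of a simple cycle cannot be joined
by a walk avoiding all edges of the cycle. -/
lemma cycle_sep [DecidableEq E] (hcac : G.IsCactus) {z : V} (p : G.Walk z z)
    (hne : p.edges ≠ []) (hnd : p.edges.Nodup) (hvd : p.verts.dropLast.Nodup) :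
    ∀ (n : ℕ) {c c' : V}, c ∈ p.verts → c' ∈ p.verts → c ≠ c' →
      ∀ P : G.Walk c c', P.edges.length ≤ n → (∀ f ∈ P.edges, f ∉ p.edges) → False := by
  intro n
  induction n with
  | zero =>
      intro c c' hc hc' hcc P hlen _
      exact hcc (eq_of_edges_eq_nil P (List.length_eq_zero_iff.mp (Nat.le_zero.mp hlen)))
  | succ n ih =>
      intro c c' hc hc' hcc P hlen hPS
      classical
      by_cases hnodup : P.verts.Nodup
      · by_cases hmid : ∃ x ∈ P.verts, x ∈ p.verts ∧ x ≠ c ∧ x ≠ c'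
        · obtain ⟨x, hxP, hxp, hxc, hxc'⟩ := hmid
          obtain ⟨P1, P2, hE, -⟩ := split_at P x hxP
          have h2ne : P2.edges ≠ [] := edges_ne_nil_of_ne P2 hxc'
          have hlt : P1.edges.length < P.edges.length := by
            have hlen' : P1.edges.length + P2.edges.length = P.edges.length := by
              rw [← hE, List.length_append]
            have : P2.edges.length ≠ 0 := fun h0 => h2ne (List.length_eq_zero_iff.mp h0)
            omega
          exact ih hc hxp hxc.symm P1 (by omega)
            (fun f hf => hPS f (hE ▸ List.mem_append_left _ hf))
        · -- build a second cycle through an edge of `p`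
          push_neg at hmid
          have hPne : P.edges ≠ [] := edges_ne_nil_of_ne P hcc
          obtain ⟨q, hqE, hqV⟩ := rotate p c' hc'
          have hqvd : q.verts.dropLast.Nodup := hqV.nodup_iff.mpr hvd
          have hqed : q.edges.Nodup := hqE.nodup_iff.mpr hnd
          have hcq : c ∈ q.verts := by
            have : c ∈ q.verts.dropLast := hqV.mem_iff.mpr (mem_verts_dropLast p hne hc)
            exact (List.dropLast_sublist q.verts).subset this
          obtain ⟨q1, q2, hE12, hV12⟩ := split_at q c hcq
          have hq1ne : q1.edges ≠ [] := edges_ne_nil_of_ne q1 (Ne.symm hcc)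
          have hq2ne : q2.edges ≠ [] := edges_ne_nil_of_ne q2 hcc
          have hq12nd : (q1.edges ++ q2.edges).Nodup := by rw [hE12]; exact hqed
          have hq1sub : ∀ f ∈ q1.edges, f ∈ p.edges := fun f hf =>
            hqE.subset (hE12 ▸ List.mem_append_left _ hf)
          -- the new closed walk
          set Q : G.Walk c c := P.append q1 with hQ
          have hQE : Q.edges = P.edges ++ q1.edges := edges_append P q1
          have hQene : Q.edges ≠ [] := by
            rw [hQE]
            simp [hPne]
          have hQnd : Q.edges.Nodup := by
            rw [hQE, List.nodup_append']
            exact ⟨edges_nodup_of_verts_nodup P hnodup,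
              (List.nodup_append'.mp hq12nd).1,
              fun f hf hf' => hPS f hf (hq1sub f hf')⟩
          have hQV : Q.verts.dropLast = P.verts.dropLast ++ q1.verts.dropLast := by
            rw [hQ, verts_append, List.dropLast_append_of_ne_nil (verts_ne_nil q1)]
          have hqdl : q.verts.dropLast = q1.verts.dropLast ++ q2.verts.dropLast := by
            rw [← hV12, List.dropLast_append_of_ne_nil (verts_ne_nil q2)]
          have hqdlnd : (q1.verts.dropLast ++ q2.verts.dropLast).Nodup := by
            rw [← hqdl]; exact hqvd
          have hq1dl_sub_p : ∀ x ∈ q1.verts.dropLast, x ∈ p.verts := by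
            intro x hx
            have : x ∈ q.verts.dropLast := hqdl ▸ List.mem_append_left _ hx
            exact (List.dropLast_sublist p.verts).subset (hqV.subset this)
          have hcq2 : c ∈ q2.verts.dropLast := start_mem_verts_dropLast q2 hq2ne
          have hPdl : P.verts = P.verts.dropLast ++ [c'] := verts_eq_dropLast_append P
          have hc'notP : c' ∉ P.verts.dropLast := by
            intro h
            have := hnodup
            rw [hPdl, List.nodup_append'] at this
            exact this.2.2 h (by simp)
          have hQvd : Q.verts.dropLast.Nodup := by
            rw [hQV, List.nodup_append']
            refine ⟨hnodup.sublist (List.dropLast_sublist _),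
              (List.nodup_append'.mp hqdlnd).1, ?_⟩
            intro x hx1 hx2
            have hxp : x ∈ p.verts := hq1dl_sub_p x hx2
            have hxP : x ∈ P.verts := (List.dropLast_sublist _).subset hx1
            by_cases hxc : x = c
            · subst hxc
              exact (List.nodup_append'.mp hqdlnd).2.2 hx2 hcq2
            · obtain rfl : x = c' := hmid x hxP hxp hxc
              exact hc'notP hx1
          -- two distinct simple cycles through an edge of q1
          obtain ⟨f0, hf0⟩ := List.exists_mem_of_ne_nil _ hq1ne
          have hf0p : f0 ∈ p.edges := hq1sub f0 hf0
          have hf0Q : f0 ∈ Q.edges := hQE ▸ List.mem_append_right _ hf0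
          obtain ⟨g0, hg0⟩ := List.exists_mem_of_ne_nil _ hPne
          have hg0Q : g0 ∈ Q.edges := hQE ▸ List.mem_append_left _ hg0
          obtain ⟨U, -, hU⟩ := hcac.2 f0
          have hSU : p.edges.toFinset = U :=
            hU _ ⟨⟨z, p, hne, hnd, hvd, rfl⟩, by simpa using hf0p⟩
          have hTU : Q.edges.toFinset = U :=
            hU _ ⟨⟨c, Q, hQene, hQnd, hQvd, rfl⟩, by simpa using hf0Q⟩
          have : g0 ∈ p.edges := by
            have : g0 ∈ p.edges.toFinset := by rw [hSU, ← hTU]; simpa using hg0Q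
            simpa using this
          exact hPS g0 hg0 this
      · obtain ⟨Q, hQlt, hQsub⟩ := shortcut P hnodup
        exact ih hc hc' hcc Q (by omega) fun f hf => hPS f (hQsub f hf)

lemma cycle_not_reach [DecidableEq E] (hcac : G.IsCactus) {z : V} (p : G.Walk z z)
    (hne : p.edges ≠ []) (hnd : p.edges.Nodup) (hvd : p.verts.dropLast.Nodup)
    {c c' : V} (hc : c ∈ p.verts) (hc' : c' ∈ p.verts) (hcc : c ≠ c')
    (h : G.ReachAvoid (↑p.edges.toFinset) c c') : False := by
  obtain ⟨P, hP⟩ := walk_of_reachAvoid h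
  exact cycle_sep hcac p hne hnd hvd P.edges.length hc hc' hcc P le_rfl
    fun f hf => by simpa using hP f hf

/-- Main combinatorial lemma: in a cactus any two distinct vertices are separated by
deleting at most two edges. -/
lemma cactus_two_cut [DecidableEq E] (hcac : G.IsCactus) {x y : V} (hxy : x ≠ y) :
    ∃ F : Finset E, F.card ≤ 2 ∧ G.IsEdgeCut x y ↑F := by
  classical
  -- a shortest walk from x to y
  obtain ⟨W, hWmin⟩ := exists_min_walk (hcac.1 x y)
  have hWne : W.edges ≠ [] := edges_ne_nil_of_ne W hxy
  -- its last edge and the cycle containing it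
  obtain ⟨e, heW, a, hay⟩ := exists_last_edge W hWne
  obtain ⟨S, ⟨hScyc, heS⟩, -⟩ := hcac.2 e
  obtain ⟨z, p, hne, hnd, hvd, hSdef⟩ := hScyc
  have hep : e ∈ p.edges := by rw [← List.mem_toFinset, hSdef]; exact heS
  have hyp : y ∈ p.verts := (ends_mem_verts p e hep hay).2
  -- the S-free prefix of W, ending at a cycle vertex c ≠ y
  obtain ⟨c, p1, hp1S, hp1lt, g, hgS, b, hgab⟩ :=
    split_first_in (S := S) W ⟨e, heW, heS⟩
  have hgp : g ∈ p.edges := by rw [← List.mem_toFinset, hSdef]; exact hgS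
  have hcp : c ∈ p.verts := (ends_mem_verts p g hgp hgab).1
  have hcy : c ≠ y := by
    rintro rfl
    exact absurd (hWmin p1) (by omega)
  have hRAxc : G.ReachAvoid (↑p.edges.toFinset) x c := by
    refine reachAvoid_of_walk p1 fun f hf hmem => ?_
    have hf' : f ∈ p.edges.toFinset := hmem
    exact hp1S f hf (hSdef ▸ hf')
  -- rotate the cycle to start at c and split at y
  obtain ⟨q, hqE, hqV⟩ := rotate p c hcp
  have hqvd : q.verts.dropLast.Nodup := hqV.nodup_iff.mpr hvd
  have hqed : q.edges.Nodup := hqE.nodup_iff.mpr hnd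
  have hyq : y ∈ q.verts := by
    have : y ∈ q.verts.dropLast := hqV.mem_iff.mpr (mem_verts_dropLast p hne hyp)
    exact (List.dropLast_sublist q.verts).subset this
  obtain ⟨q1, q2, hE12, hV12⟩ := split_at q y hyq
  obtain ⟨a1, f1, r1, hf1e, rfl⟩ := cons_of_ne q1 hcy
  obtain ⟨a2, f2, r2, hf2e, rfl⟩ := cons_of_ne q2 (Ne.symm hcy)
  rw [edges_cons, edges_cons] at hE12
  have hq12nd : ((f1 :: r1.edges) ++ (f2 :: r2.edges)).Nodup := by rw [hE12]; exact hqed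
  have hf1f2 : f1 ≠ f2 := by
    rcases List.nodup_append'.mp hq12nd with ⟨-, -, hdis⟩
    exact fun h => hdis (List.mem_cons_self (a := f1)) (by rw [h]; exact List.mem_cons_self (a := f2))
  -- vertex bookkeeping for the two arcs
  have hq1dl : (Walk.cons f1 hf1e r1).verts.dropLast = c :: r1.verts.dropLast :=
    verts_dropLast_cons f1 hf1e r1
  have hqdl : q.verts.dropLast =
      (c :: r1.verts.dropLast) ++ (y :: r2.verts.dropLast) := by
    rw [← hV12, List.dropLast_append_of_ne_nil (verts_ne_nil _), hq1dl,
      verts_dropLast_cons f2 hf2e r2]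
  have hbig : ((c :: r1.verts.dropLast) ++ (y :: r2.verts.dropLast)).Nodup := by
    rw [← hqdl]; exact hqvd
  obtain ⟨hnd1, hnd2, hdisbig⟩ := List.nodup_append'.mp hbig
  have hr1split : r1.verts = r1.verts.dropLast ++ [y] := verts_eq_dropLast_append r1
  have hr2split : r2.verts = r2.verts.dropLast ++ [c] := verts_eq_dropLast_append r2
  have hbig_sub_p : ∀ t ∈ (c :: r1.verts.dropLast) ++ (y :: r2.verts.dropLast),
      t ∈ p.verts := by
    intro t ht
    have : t ∈ q.verts.dropLast := hqdl ▸ ht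
    exact (List.dropLast_sublist p.verts).subset (hqV.subset this)
  have hr1sub : ∀ t ∈ r1.verts, t ∈ p.verts := by
    intro t ht
    rw [hr1split, List.mem_append] at ht
    rcases ht with ht | ht
    · exact hbig_sub_p t (by simp [ht])
    · obtain rfl : t = y := by simpa using ht
      exact hyp
  have hr2sub : ∀ t ∈ r2.verts, t ∈ p.verts := by
    intro t ht
    rw [hr2split, List.mem_append] at ht
    rcases ht with ht | ht
    · exact hbig_sub_p t (by simp [ht])
    · obtain rfl : t = c := by simpa using ht
      exact hcp
  have hdisj : ∀ t ∈ r1.verts, t ∉ r2.verts := by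
    intro t ht1 ht2
    rw [hr1split, List.mem_append] at ht1
    rw [hr2split, List.mem_append] at ht2
    rcases ht1 with ht1 | ht1 <;> rcases ht2 with ht2 | ht2
    · exact hdisbig (List.mem_cons_of_mem _ ht1) (List.mem_cons_of_mem _ ht2)
    · obtain rfl : t = c := by simpa using ht2
      exact (List.nodup_cons.mp hnd1).1 ht1
    · obtain rfl : t = y := by simpa using ht1
      exact (List.nodup_cons.mp hnd2).1 ht2
    · obtain rfl : t = y := by simpa using ht1
      exact hcy.symm (by simpa using ht2)
  -- the cut
  refine ⟨{f1, f2}, ?_, ?_⟩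
  · exact le_trans (Finset.card_insert_le _ _) (by simp)
  intro hra
  -- the invariant: reachability (avoiding all of S) to the arc r2
  set γ : V → Prop := fun t => ∃ s ∈ r2.verts, G.ReachAvoid (↑p.edges.toFinset) t s
    with hγdef
  have hγnot : ∀ t, t ∈ r1.verts → ¬ γ t := by
    rintro t ht ⟨s, hs, hres⟩
    have hts : t ≠ s := fun h => hdisj t ht (h ▸ hs)
    exact cycle_not_reach hcac p hne hnd hvd (hr1sub t ht) (hr2sub s hs) hts hres
  have hstep : ∀ (t t' : V), γ t → ∀ e0 : E, (e0 : E) ∉ (↑({f1, f2} : Finset E) : Set E) →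
      G.ends e0 = s(t, t') → γ t' := by
    intro t t' hγt e0 he0 hends
    have he0' : e0 ≠ f1 ∧ e0 ≠ f2 := by simpa using he0
    by_cases he0p : e0 ∈ p.edges
    · -- a cycle edge other than f1, f2 : both endpoints on the same arc
      have he0q : e0 ∈ (f1 :: r1.edges) ++ (f2 :: r2.edges) := by
        rw [hE12]
        exact hqE.mem_iff.mpr he0p
      rcases List.mem_append.mp he0q with h1 | h2
      · have h1' : e0 ∈ r1.edges := (List.mem_cons.mp h1).resolve_left he0'.1
        have hmem := ends_mem_verts r1 e0 h1' hends
        exact absurd hγt (hγnot t hmem.1)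
      · have h2' : e0 ∈ r2.edges := (List.mem_cons.mp h2).resolve_left he0'.2
        have hmem := ends_mem_verts r2 e0 h2' hends
        exact ⟨t', hmem.2, .refl t'⟩
    · obtain ⟨s, hs, hres⟩ := hγt
      refine ⟨s, hs, .trans (ReachAvoid.single e0 ?_ (hends.trans Sym2.eq_swap)) hres⟩
      simpa using he0p
  have hγx : γ x := ⟨c, end_mem_verts r2, hRAxc⟩
  have hγy : γ y := by
    have main : ∀ t t' : V, G.ReachAvoid (↑({f1, f2} : Finset E)) t t' → γ t → γ t' := by
      intro t t' h
      induction h with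
      | refl => exact _root_.id
      | tail e0 he0 hvw _ ih =>
          intro hγt
          exact hstep _ _ (ih hγt) e0 he0 hvw
    exact main x y hra hγx
  exact hγnot y (end_mem_verts r1) hγy

lemma reachAvoid_quot {F : Set E} (σ : Setoid V) :
    ∀ {a b : V}, G.ReachAvoid F a b →
      (G.quot σ).ReachAvoid F (Quotient.mk σ a) (Quotient.mk σ b) := by
  intro a b h
  induction h with
  | refl => exact .refl _
  | tail e he hvw _ ih =>
      refine .tail e he ?_ ih
      show (G.ends e).map (Quotient.mk σ) = _
      rw [hvw, Sym2.map_pair_eq]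

end Multigraph

end ThreeConnAux


/-- (3-connection lemma.)  If `v ≠ w` form a 3-connection in `G`
(`λ(v, w) ≥ 3`) and `π` is a partition whose quotient `G^π` is a cactus, then `v` and `w`
lie in the same block of `π`. -/
theorem stmt_4 {V E : Type} [Fintype V] [Fintype E] [DecidableEq E]
    (G : Multigraph V E) (v w : V) (hvw : v ≠ w) (h3 : 3 ≤ G.edgeConn v w)
    (σ : Setoid V) (hcactus : (G.quot σ).IsCactus) :
    σ.r v w := by
  classical
  by_contra hnr
  have hxy : (Quotient.mk σ v) ≠ (Quotient.mk σ w) := fun h => hnr (Quotient.eq.mp h)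
  obtain ⟨F, hcard, hcut⟩ := Multigraph.cactus_two_cut hcactus hxy
  have hliftcut : G.IsEdgeCut v w ↑F :=
    fun hra => hcut (Multigraph.reachAvoid_quot σ hra)
  have hle : G.edgeConn v w ≤ F.card := Nat.sInf_le ⟨F, rfl, hliftcut⟩
  omega
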